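/- Let A₁, A₂ ⊆ ℂ be finite sets, m₁, m₂ : ℂ → ℂ, and N_i(u) = Σ_{α∈A_i} m_i(α) u^α for i = 1, 2. Let s, w ∈ ℂ with Re(w) > 0 and Re(s) > Re(α₁) + Re(α₂) for every α₁ ∈ A₁ and α₂ ∈ A₂. Then (1/Γ(w)) · ∫_{1}^{∞} N₁(u) N₂(u) · u^{−s−1} (log u)^{w−1} du = Σ_{α₁∈A₁} Σ_{α₂∈A₂} m₁(α₁) m₂(α₂) (s−(α₁+α₂))^{−w}. -/

import Mathlib

open MeasureTheory Complex Set Filter Topology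

-- real integrability
lemma real_gamma_int {c s : ℝ} (hc : 0 < c) (hs : 0 < s) :
    IntegrableOn (fun t : ℝ => t ^ (s - 1) * Real.exp (-(c * t))) (Ioi 0) := by
  have h := Real.GammaIntegral_convergent hs
  rw [← mul_zero c, ← integrableOn_Ioi_comp_mul_left_iff _ _ hc] at h
  have h2 := h.const_mul (c ^ (s - 1))⁻¹
  refine IntegrableOn.congr_fun h2 (fun t ht => ?_) measurableSet_Ioi
  rw [mem_Ioi] at ht
  rw [Real.mul_rpow hc.le ht.le]
  field_simp [Real.rpow_natCast, (Real.rpow_pos_of_pos hc _).ne']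

-- complex integrability
lemma cplx_gamma_int {b w : ℂ} (hb : 0 < b.re) (hw : 0 < w.re) :
    IntegrableOn (fun t : ℝ => (t : ℂ) ^ (w - 1) * Complex.exp (-b * t)) (Ioi 0) := by
  have hmeas : AEStronglyMeasurable (fun t : ℝ => (t : ℂ) ^ (w - 1) * Complex.exp (-b * t))
      (volume.restrict (Ioi 0)) := by
    refine (ContinuousOn.mul ?_ ?_).aestronglyMeasurable measurableSet_Ioi
    · apply continuousOn_of_forall_continuousAt
      intro x hx
      exact (continuousAt_cpow_const (ofReal_mem_slitPlane.2 hx)).comp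
        continuous_ofReal.continuousAt
    · exact (Complex.continuous_exp.comp (continuous_const.mul continuous_ofReal)).continuousOn
  refine Integrable.mono' (real_gamma_int hb hw) hmeas ?_
  filter_upwards [ae_restrict_mem measurableSet_Ioi] with t ht
  rw [mem_Ioi] at ht
  rw [norm_mul,
    Complex.norm_cpow_eq_rpow_re_of_pos ht, Complex.norm_exp]
  simp [Complex.sub_re, mul_comm]

lemma cplx_gamma_eval {w : ℂ} (hw : 0 < w.re) {b : ℂ} (hb : 0 < b.re) :
    ∫ t in Ioi (0 : ℝ), (t : ℂ) ^ (w - 1) * Complex.exp (-b * t) =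
      Complex.Gamma w * b ^ (-w) := by
  set F : ℂ → ℂ := fun z => ∫ t in Ioi (0 : ℝ), (t : ℂ) ^ (w - 1) * Complex.exp (-z * t) with hF
  set G : ℂ → ℂ := fun z => Complex.Gamma w * z ^ (-w) with hG
  set U : Set ℂ := {z | 0 < z.re} with hU
  have hUopen : IsOpen U := isOpen_lt continuous_const Complex.continuous_re
  have hUconv : Convex ℝ U := convex_halfSpace_re_gt 0
  -- F is analytic on U
  have hFd : ∀ z ∈ U, DifferentiableAt ℂ F z := by
    intro z hz
    rw [hU, mem_setOf_eq] at hz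
    have hε : (0 : ℝ) < z.re / 2 := by linarith
    have key := hasDerivAt_integral_of_dominated_loc_of_deriv_le (μ := volume.restrict (Ioi 0))
      (F := fun x (t : ℝ) => (t : ℂ) ^ (w - 1) * Complex.exp (-x * t))
      (F' := fun x (t : ℝ) => -(t : ℂ) * ((t : ℂ) ^ (w - 1) * Complex.exp (-x * t)))
      (x₀ := z) (bound := fun t : ℝ => t ^ ((w.re + 1) - 1) * Real.exp (-(z.re / 2 * t)))
      (Metric.ball_mem_nhds z hε) ?_ ?_ ?_ ?_ ?_ ?_
    · exact key.2.differentiableAt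
    · filter_upwards with x
      refine (ContinuousOn.mul ?_ ?_).aestronglyMeasurable measurableSet_Ioi
      · apply continuousOn_of_forall_continuousAt
        intro t ht
        exact (continuousAt_cpow_const (ofReal_mem_slitPlane.2 ht)).comp
          continuous_ofReal.continuousAt
      · exact (Complex.continuous_exp.comp (continuous_const.mul continuous_ofReal)).continuousOn
    · exact cplx_gamma_int hz hw
    · refine (Continuous.aestronglyMeasurable (by continuity)).mul ?_
      refine (ContinuousOn.mul ?_ ?_).aestronglyMeasurable measurableSet_Ioi
      · apply continuousOn_of_forall_continuousAt
        intro t ht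
        exact (continuousAt_cpow_const (ofReal_mem_slitPlane.2 ht)).comp
          continuous_ofReal.continuousAt
      · exact (Complex.continuous_exp.comp (continuous_const.mul continuous_ofReal)).continuousOn
    · filter_upwards [ae_restrict_mem measurableSet_Ioi] with t ht x hx
      rw [mem_Ioi] at ht
      rw [Metric.mem_ball, Complex.dist_eq] at hx
      have hxre : z.re / 2 < x.re := by
        have h1 : |(x - z).re| ≤ ‖x - z‖ := Complex.abs_re_le_norm _
        rw [Complex.sub_re] at h1
        have := abs_lt.mp (h1.trans_lt hx)
        linarith [this.1]
      rw [norm_mul, norm_mul, norm_neg,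
        Complex.norm_real, Real.norm_eq_abs, Complex.norm_cpow_eq_rpow_re_of_pos ht,
        Complex.norm_exp, abs_of_pos ht]
      have : t ^ (w.re + 1 - 1) = t * t ^ ((w - 1).re) := by
        rw [Complex.sub_re, Complex.one_re, add_sub_cancel_right,
          ← Real.rpow_one_add' ht.le (by rw [show (1 : ℝ) + (w.re - 1) = w.re by ring]; positivity)]
        congr 1
        ring
      rw [this, mul_assoc]
      refine mul_le_mul_of_nonneg_left ?_ ht.le
      refine mul_le_mul_of_nonneg_left ?_ (Real.rpow_nonneg ht.le _)
      apply Real.exp_le_exp.mpr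
      have : (-x * t).re = -(x.re * t) := by simp
      rw [this]
      nlinarith
    · exact real_gamma_int (by linarith) (by linarith)
    · filter_upwards [ae_restrict_mem measurableSet_Ioi] with t ht x hx
      have h1 : HasDerivAt (fun x : ℂ => -x * (t : ℂ)) (-1 * t) x :=
        (hasDerivAt_id x).neg.mul_const _
      have h2 := (h1.cexp).const_mul ((t : ℂ) ^ (w - 1))
      exact h2.congr_deriv (by ring)
  have hFan : AnalyticOnNhd ℂ F U := DifferentiableOn.analyticOnNhd
    (fun z hz => (hFd z hz).differentiableWithinAt) hUopen
  have hGan : AnalyticOnNhd ℂ G U := by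
    refine DifferentiableOn.analyticOnNhd (fun z hz => DifferentiableAt.differentiableWithinAt ?_)
      hUopen
    exact ((differentiableAt_id.cpow (differentiableAt_const _)
      (Complex.mem_slitPlane_iff.mpr (Or.inl hz))).const_mul _)
  -- agreement at real points
  have hseq : ∀ r : ℝ, 0 < r → F r = G r := by
    intro r hr
    have h := Complex.integral_cpow_mul_exp_neg_mul_Ioi (a := w) (r := r) hw hr
    have h2 : ((1 : ℂ) / r) ^ w = (r : ℂ) ^ (-w) := by
      rw [one_div, Complex.inv_cpow _ _
        (by rw [Complex.arg_ofReal_of_nonneg hr.le]; exact Real.pi_pos.ne), ← Complex.cpow_neg]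
    rw [hF, hG]
    simp only
    rw [← h2, mul_comm (Complex.Gamma w), ← h]
    refine setIntegral_congr_fun measurableSet_Ioi (fun t ht => ?_)
    ring_nf
  -- conclude by analytic continuation
  have h1 : Tendsto (fun n : ℕ => (1 + ((n : ℝ) + 1)⁻¹ : ℂ)) atTop (nhdsWithin 1 {(1 : ℂ)}ᶜ) := by
    apply tendsto_nhdsWithin_of_tendsto_nhds_of_eventually_within
    · have : Tendsto (fun n : ℕ => ((n : ℝ) + 1)⁻¹) atTop (nhds 0) :=
        tendsto_one_div_add_atTop_nhds_zero_nat.congr (by simp [one_div])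
      have := ((Complex.continuous_ofReal.tendsto 0).comp this).const_add (1 : ℂ)
      simpa using this
    · filter_upwards with n
      simp only [mem_compl_iff, mem_singleton_iff]
      intro h
      have h' : (((n : ℝ) + 1)⁻¹ : ℂ) = 0 := by
        have := congrArg (· - 1) h
        simpa [add_sub_cancel_left] using this
      rw [inv_eq_zero] at h'
      have : ((n : ℝ) + 1) = 0 := by exact_mod_cast h'
      linarith [Nat.cast_nonneg (α := ℝ) n]
  have hfreq : ∃ᶠ z in nhdsWithin 1 {(1 : ℂ)}ᶜ, F z = G z := by
    apply h1.frequently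
    apply Filter.Frequently.of_forall
    intro n
    exact_mod_cast hseq (1 + ((n : ℝ) + 1)⁻¹) (by positivity)
  have heq := hFan.eqOn_of_preconnected_of_frequently_eq hGan hUconv.isPreconnected
    (by simp [hU] : (1 : ℂ) ∈ U) hfreq
  exact heq hb

lemma log_int_integrable {b w : ℂ} (hb : 0 < b.re) (hw : 0 < w.re) :
    IntegrableOn (fun u : ℝ => (u : ℂ) ^ (-b - 1) * (Real.log u : ℂ) ^ (w - 1)) (Ioi 1) := by
  have himg : Real.exp '' (Ioi (0 : ℝ)) = Ioi 1 := by
    ext x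
    constructor
    · rintro ⟨t, ht, rfl⟩
      exact Real.exp_zero ▸ Real.exp_lt_exp.mpr ht
    · intro hx
      exact ⟨Real.log x, Real.log_pos hx, Real.exp_log (by linarith [mem_Ioi.mp hx])⟩
  have hderiv : ∀ t ∈ Ioi (0 : ℝ), HasDerivWithinAt Real.exp (Real.exp t) (Ioi 0) t :=
    fun t _ => (Real.hasDerivAt_exp t).hasDerivWithinAt
  have hinj : InjOn Real.exp (Ioi 0) := Real.exp_injective.injOn
  have hpt : ∀ t ∈ Ioi (0 : ℝ), |Real.exp t| •
      ((Real.exp t : ℂ) ^ (-b - 1) * (Real.log (Real.exp t) : ℂ) ^ (w - 1)) =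
      (t : ℂ) ^ (w - 1) * Complex.exp (-b * t) := by
    intro t _
    rw [Real.log_exp, abs_of_pos (Real.exp_pos t), Complex.real_smul, Complex.ofReal_exp,
      show ((Complex.exp t) ^ (-b - 1) : ℂ) = Complex.exp ((t : ℂ) * (-b - 1)) by
        rw [Complex.cpow_def_of_ne_zero (Complex.exp_ne_zero _), Complex.log_exp] <;>
          simp [Real.pi_pos, Real.pi_nonneg],
      ← mul_assoc, ← Complex.exp_add, show (t : ℂ) + (t : ℂ) * (-b - 1) = -b * t by ring,
      mul_comm]
  rw [← himg, integrableOn_image_iff_integrableOn_abs_deriv_smul measurableSet_Ioi hderiv hinj]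
  exact IntegrableOn.congr_fun (cplx_gamma_int hb hw) (fun t ht => (hpt t ht).symm)
    measurableSet_Ioi

lemma log_int_eval {b w : ℂ} (hb : 0 < b.re) (hw : 0 < w.re) :
    ∫ u in Ioi (1 : ℝ), (u : ℂ) ^ (-b - 1) * (Real.log u : ℂ) ^ (w - 1) =
      Complex.Gamma w * b ^ (-w) := by
  have himg : Real.exp '' (Ioi (0 : ℝ)) = Ioi 1 := by
    ext x
    constructor
    · rintro ⟨t, ht, rfl⟩
      exact Real.exp_zero ▸ Real.exp_lt_exp.mpr ht
    · intro hx
      exact ⟨Real.log x, Real.log_pos hx, Real.exp_log (by linarith [mem_Ioi.mp hx])⟩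
  have hderiv : ∀ t ∈ Ioi (0 : ℝ), HasDerivWithinAt Real.exp (Real.exp t) (Ioi 0) t :=
    fun t _ => (Real.hasDerivAt_exp t).hasDerivWithinAt
  have hinj : InjOn Real.exp (Ioi 0) := Real.exp_injective.injOn
  have hpt : ∀ t ∈ Ioi (0 : ℝ), |Real.exp t| •
      ((Real.exp t : ℂ) ^ (-b - 1) * (Real.log (Real.exp t) : ℂ) ^ (w - 1)) =
      (t : ℂ) ^ (w - 1) * Complex.exp (-b * t) := by
    intro t _
    rw [Real.log_exp, abs_of_pos (Real.exp_pos t), Complex.real_smul, Complex.ofReal_exp,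
      show ((Complex.exp t) ^ (-b - 1) : ℂ) = Complex.exp ((t : ℂ) * (-b - 1)) by
        rw [Complex.cpow_def_of_ne_zero (Complex.exp_ne_zero _), Complex.log_exp] <;>
          simp [Real.pi_pos, Real.pi_nonneg],
      ← mul_assoc, ← Complex.exp_add, show (t : ℂ) + (t : ℂ) * (-b - 1) = -b * t by ring,
      mul_comm]
  rw [← himg, integral_image_eq_integral_abs_deriv_smul measurableSet_Ioi hderiv hinj,
    ← cplx_gamma_eval hw hb]
  exact setIntegral_congr_fun measurableSet_Ioi hpt

theorem absolute_hurwitz_tensor_product (A₁ A₂ : Finset ℂ) (m₁ m₂ : ℂ → ℂ) (s w : ℂ)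
    (hw : 0 < w.re) (hs : ∀ α₁ ∈ A₁, ∀ α₂ ∈ A₂, α₁.re + α₂.re < s.re) :
    (1 / Complex.Gamma w) *
      ∫ u in Set.Ioi (1 : ℝ),
        (∑ α ∈ A₁, m₁ α * (u : ℂ) ^ α) * (∑ α ∈ A₂, m₂ α * (u : ℂ) ^ α) *
          (u : ℂ) ^ (-s - 1) * (Real.log u : ℂ) ^ (w - 1) =
    ∑ α₁ ∈ A₁, ∑ α₂ ∈ A₂, m₁ α₁ * m₂ α₂ * (s - (α₁ + α₂)) ^ (-w) := by
  have hΓ : Complex.Gamma w ≠ 0 := by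
    apply Complex.Gamma_ne_zero
    intro m h
    rw [h] at hw
    simp only [Complex.neg_re, Complex.natCast_re] at hw
    linarith [Nat.cast_nonneg (α := ℝ) m]
  have hb : ∀ α₁ ∈ A₁, ∀ α₂ ∈ A₂, 0 < (s - (α₁ + α₂)).re := by
    intro α₁ h₁ α₂ h₂
    have := hs α₁ h₁ α₂ h₂
    simp only [Complex.sub_re, Complex.add_re]
    linarith
  have hcong : (∫ u in Ioi (1 : ℝ),
        (∑ α ∈ A₁, m₁ α * (u : ℂ) ^ α) * (∑ α ∈ A₂, m₂ α * (u : ℂ) ^ α) *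
          (u : ℂ) ^ (-s - 1) * (Real.log u : ℂ) ^ (w - 1)) =
      ∫ u in Ioi (1 : ℝ), ∑ α₁ ∈ A₁, ∑ α₂ ∈ A₂, m₁ α₁ * m₂ α₂ *
        ((u : ℂ) ^ (-(s - (α₁ + α₂)) - 1) * (Real.log u : ℂ) ^ (w - 1)) := by
    refine setIntegral_congr_fun measurableSet_Ioi (fun u hu => ?_)
    have hu1 : (1 : ℝ) < u := mem_Ioi.mp hu
    have hu0 : (u : ℂ) ≠ 0 := Complex.ofReal_ne_zero.mpr (by linarith)
    rw [Finset.sum_mul_sum, Finset.sum_mul, Finset.sum_mul]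
    refine Finset.sum_congr rfl (fun α₁ h₁ => ?_)
    rw [Finset.sum_mul, Finset.sum_mul]
    refine Finset.sum_congr rfl (fun α₂ h₂ => ?_)
    rw [show -(s - (α₁ + α₂)) - 1 = α₁ + (α₂ + (-s - 1)) by ring,
      Complex.cpow_add _ _ hu0, Complex.cpow_add _ _ hu0]
    ring
  rw [hcong, integral_finset_sum _ (fun α₁ h₁ => integrable_finset_sum _ (fun α₂ h₂ =>
    ((log_int_integrable (hb α₁ h₁ α₂ h₂) hw).const_mul _)))]
  rw [Finset.mul_sum]
  refine Finset.sum_congr rfl (fun α₁ h₁ => ?_)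
  rw [integral_finset_sum _ (fun α₂ h₂ => ((log_int_integrable (hb α₁ h₁ α₂ h₂) hw).const_mul _)),
    Finset.mul_sum]
  refine Finset.sum_congr rfl (fun α₂ h₂ => ?_)
  rw [integral_const_mul, log_int_eval (hb α₁ h₁ α₂ h₂) hw]
  field_simp
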